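/- arXiv:1604.04714 — 3 statements merged into one kernel-verified Lean document; each statement's English description precedes it below -/
import Mathlib

section
/- Under the hypotheses on the Bloch-decomposition step B_{Δt} (in particular the two orthogonality relations for each φ_j, which hold when the number of bands equals the number of grid points per cell, M = R), the map B_{Δt} conserves the total discrete mass: for every ψ : {0,…,L−1}×{0,…,R−1} → ℂ, writing ψ' = B_{Δt}(ψ), one has ∑_{ℓ=0}^{L−1}∑_{r=0}^{R−1} |ψ'(ℓ,r)|² = ∑_{ℓ=0}^{L−1}∑_{r=0}^{R−1} |ψ(ℓ,r)|². -/
open Complex Finset Real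

/-- One Bloch-decomposition step `B_{Δt}` of the Bloch decomposition-based
time-splitting scheme, on the fully discrete level: `L` quasi-momentum points
`k_ℓ = -1/2 + ℓ/L`, `R` grid points per cell, discrete Bloch eigenfunctions
`φ ℓ m r ≈ φ_m(y_r, k_ℓ)` and band energies `E ℓ m ≈ E_m(k_ℓ)`. -/
noncomputable def blochStep (L R : ℕ) (ε Δt : ℝ)
    (φ : Fin L → Fin R → Fin R → ℂ) (E : Fin L → Fin R → ℝ)
    (ψ : Fin L → Fin R → ℂ) : Fin L → Fin R → ℂ :=
  let k : Fin L → ℝ := fun ℓ => -(1/2 : ℝ) + (ℓ : ℝ) / L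
  -- step 1.1: ψ̃(ℓ,r) = ∑_j ψ(j,r) exp(−2πi k_ℓ j)
  let ψt : Fin L → Fin R → ℂ := fun ℓ r =>
    ∑ j : Fin L, ψ j r * Complex.exp (-(2 * π * Complex.I * (k ℓ) * (j : ℝ)))
  -- step 1.2: C(m,ℓ) = (2π/R) ∑_r ψ̃(ℓ,r) conj(φ_ℓ(m,r))
  let C : Fin R → Fin L → ℂ := fun m ℓ =>
    (2 * (π : ℂ) / R) * ∑ r : Fin R, ψt ℓ r * (starRingEnd ℂ) (φ ℓ m r)
  -- step 1.3: C'(m,ℓ) = C(m,ℓ) exp(−i E_ℓ(m) Δt / ε)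
  let C' : Fin R → Fin L → ℂ := fun m ℓ =>
    C m ℓ * Complex.exp (-(Complex.I * (E ℓ m) * Δt / ε))
  -- step 1.4: ψ̃'(ℓ,r) = ∑_m C'(m,ℓ) φ_ℓ(m,r)
  let ψt' : Fin L → Fin R → ℂ := fun ℓ r => ∑ m : Fin R, C' m ℓ * φ ℓ m r
  -- step 1.5: ψ'(ℓ,r) = (1/L) ∑_j ψ̃'(j,r) exp(2πi k_j ℓ)
  fun ℓ r =>
    (1 / (L : ℂ)) * ∑ j : Fin L, ψt' j r * Complex.exp (2 * π * Complex.I * (k j) * (ℓ : ℝ))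

lemma sum_exp_eq_zero (L : ℕ) (hL : 0 < L) (d : ℤ) (hd : ¬ ((L:ℤ) ∣ d)) :
    ∑ ℓ : Fin L, Complex.exp (2 * ↑Real.pi * Complex.I * d * ℓ / L) = 0 := by
  have hLC : (L:ℂ) ≠ 0 := Nat.cast_ne_zero.mpr hL.ne'
  set z : ℂ := Complex.exp (2 * ↑Real.pi * Complex.I * d / L) with hz
  have hterm : ∀ ℓ : Fin L,
      Complex.exp (2 * ↑Real.pi * Complex.I * d * ℓ / L) = z ^ (ℓ:ℕ) := by
    intro ℓ
    rw [hz, ← Complex.exp_nat_mul]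
    congr 1
    ring
  have hzL : z ^ L = 1 := by
    rw [hz, ← Complex.exp_nat_mul]
    have h : (L:ℂ) * (2 * ↑Real.pi * Complex.I * d / L) = d * (2 * ↑Real.pi * Complex.I) := by
      field_simp
    rw [h, Complex.exp_int_mul_two_pi_mul_I]
  have hz1 : z ≠ 1 := by
    intro h
    rw [hz, Complex.exp_eq_one_iff] at h
    obtain ⟨n, hn⟩ := h
    apply hd
    refine ⟨n, ?_⟩
    have h2πI : ((2:ℂ) * ↑Real.pi * Complex.I) ≠ 0 := by
      simp [Real.pi_ne_zero, Complex.I_ne_zero]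
    have hc : (d:ℂ) = (L:ℂ) * n := by
      field_simp at hn
      have h2 : (2 * (Real.pi:ℂ) * Complex.I) * (d:ℂ)
          = (2 * (Real.pi:ℂ) * Complex.I) * ((L:ℂ) * n) := by linear_combination (2 * (Real.pi:ℂ) * Complex.I) * hn
      exact mul_left_cancel₀ h2πI h2
    exact_mod_cast hc
  simp_rw [hterm]
  rw [Fin.sum_univ_eq_sum_range (fun i => z ^ i) L, geom_sum_eq hz1, hzL]
  simp

lemma not_dvd_sub {L : ℕ} (a b : Fin L) (hab : a ≠ b) : ¬ ((L:ℤ) ∣ ((a:ℤ) - (b:ℤ))) := by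
  intro ⟨t, ht⟩
  have ha : (a:ℕ) < L := a.isLt
  have hb : (b:ℕ) < L := b.isLt
  have hne : (a:ℕ) ≠ (b:ℕ) := fun h => hab (Fin.ext h)
  rcases lt_trichotomy t 0 with h | h | h
  · have h1 : t ≤ -1 := by omega
    have h2 : (L:ℤ) * t ≤ -(L:ℤ) := by nlinarith [Int.natCast_pos.mpr (show 0 < L by omega)]
    omega
  · subst h
    simp at ht
    omega
  · have h1 : 1 ≤ t := h
    have h2 : (L:ℤ) ≤ (L:ℤ) * t := by nlinarith
    omega

lemma unitary_sum {N M : ℕ} (K : Fin N → Fin M → ℂ) (c : ℂ)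
    (h : ∀ a b : Fin M, ∑ i : Fin N, K i a * (starRingEnd ℂ) (K i b) = if a = b then c else 0)
    (v : Fin M → ℂ) :
    ∑ i : Fin N, (∑ a : Fin M, v a * K i a) * (starRingEnd ℂ) (∑ b : Fin M, v b * K i b)
      = c * ∑ a : Fin M, v a * (starRingEnd ℂ) (v a) := by
  have h1 : ∀ i : Fin N, (∑ a : Fin M, v a * K i a) * (starRingEnd ℂ) (∑ b : Fin M, v b * K i b)
      = ∑ a : Fin M, ∑ b : Fin M,
          (v a * (starRingEnd ℂ) (v b)) * (K i a * (starRingEnd ℂ) (K i b)) := by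
    intro i
    rw [map_sum, Finset.sum_mul_sum]
    refine Finset.sum_congr rfl fun a _ => Finset.sum_congr rfl fun b _ => ?_
    simp only [map_mul]
    ring
  simp_rw [h1]
  rw [Finset.sum_comm]
  have h2 : ∀ a : Fin M,
      ∑ i : Fin N, ∑ b : Fin M,
          (v a * (starRingEnd ℂ) (v b)) * (K i a * (starRingEnd ℂ) (K i b))
      = ∑ b : Fin M, (v a * (starRingEnd ℂ) (v b)) * ∑ i : Fin N, (K i a * (starRingEnd ℂ) (K i b)) := by
    intro a
    rw [Finset.sum_comm]
    exact Finset.sum_congr rfl fun b _ => (Finset.mul_sum _ _ _).symm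
  simp_rw [h2, h]
  rw [Finset.mul_sum]
  refine Finset.sum_congr rfl fun a _ => ?_
  simp [mul_ite, Finset.sum_ite_eq']
  ring


noncomputable def kval (L : ℕ) (ℓ : Fin L) : ℝ := -(1/2 : ℝ) + (ℓ : ℝ) / L

noncomputable def psit (L R : ℕ) (ψ : Fin L → Fin R → ℂ) : Fin L → Fin R → ℂ :=
  fun ℓ r => ∑ j : Fin L, ψ j r * Complex.exp (-(2 * ↑Real.pi * Complex.I * ((kval L ℓ : ℝ):ℂ) * ((j : ℝ):ℂ)))

noncomputable def Cfun (L R : ℕ) (φ : Fin L → Fin R → Fin R → ℂ) (ψ : Fin L → Fin R → ℂ) :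
    Fin R → Fin L → ℂ :=
  fun m ℓ => (2 * ((Real.pi:ℝ) : ℂ) / R) * ∑ r : Fin R, psit L R ψ ℓ r * (starRingEnd ℂ) (φ ℓ m r)

noncomputable def Cfun' (L R : ℕ) (ε Δt : ℝ) (φ : Fin L → Fin R → Fin R → ℂ)
    (E : Fin L → Fin R → ℝ) (ψ : Fin L → Fin R → ℂ) : Fin R → Fin L → ℂ :=
  fun m ℓ => Cfun L R φ ψ m ℓ *
    Complex.exp (-(Complex.I * ((E ℓ m : ℝ):ℂ) * ((Δt:ℝ):ℂ) / ((ε:ℝ):ℂ)))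

noncomputable def psit' (L R : ℕ) (ε Δt : ℝ) (φ : Fin L → Fin R → Fin R → ℂ)
    (E : Fin L → Fin R → ℝ) (ψ : Fin L → Fin R → ℂ) : Fin L → Fin R → ℂ :=
  fun ℓ r => ∑ m : Fin R, Cfun' L R ε Δt φ E ψ m ℓ * φ ℓ m r

lemma blochStep_eq (L R : ℕ) (ε Δt : ℝ) (φ : Fin L → Fin R → Fin R → ℂ)
    (E : Fin L → Fin R → ℝ) (ψ : Fin L → Fin R → ℂ) (ℓ : Fin L) (r : Fin R) :
    blochStep L R ε Δt φ E ψ ℓ r =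
      (1 / (L : ℂ)) * ∑ j : Fin L, psit' L R ε Δt φ E ψ j r *
        Complex.exp (2 * ↑Real.pi * Complex.I * ((kval L j : ℝ):ℂ) * ((ℓ : ℝ):ℂ)) := by
  simp only [blochStep, psit', Cfun', Cfun, psit, kval]

lemma orthA (L : ℕ) (hL : 0 < L) (a b : Fin L) :
    ∑ ℓ : Fin L,
        Complex.exp (-(2 * ↑Real.pi * Complex.I * ((kval L ℓ : ℝ) : ℂ) * ((a:ℝ):ℂ)))
          * (starRingEnd ℂ)
            (Complex.exp (-(2 * ↑Real.pi * Complex.I * ((kval L ℓ : ℝ) : ℂ) * ((b:ℝ):ℂ))))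
      = if a = b then (L:ℂ) else 0 := by
  have hLC : (L:ℂ) ≠ 0 := Nat.cast_ne_zero.mpr hL.ne'
  rcases eq_or_ne a b with rfl | hab
  · simp only [if_pos rfl]
    have h1 : ∀ ℓ : Fin L,
        Complex.exp (-(2 * ↑Real.pi * Complex.I * ((kval L ℓ : ℝ) : ℂ) * ((a:ℝ):ℂ)))
          * (starRingEnd ℂ)
            (Complex.exp (-(2 * ↑Real.pi * Complex.I * ((kval L ℓ : ℝ) : ℂ) * ((a:ℝ):ℂ))))
        = 1 := by
      intro ℓ
      rw [← Complex.exp_conj, ← Complex.exp_add]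
      have h0 : -(2 * ↑Real.pi * Complex.I * ((kval L ℓ : ℝ) : ℂ) * ((a:ℝ):ℂ))
          + (starRingEnd ℂ) (-(2 * ↑Real.pi * Complex.I * ((kval L ℓ : ℝ) : ℂ) * ((a:ℝ):ℂ))) = 0 := by
        simp only [map_neg, map_mul, Complex.conj_I, Complex.conj_ofReal, map_ofNat]
        ring
      rw [h0, Complex.exp_zero]
    simp only [h1]
    simp
  · rw [if_neg hab]
    have hterm : ∀ ℓ : Fin L,
        Complex.exp (-(2 * ↑Real.pi * Complex.I * ((kval L ℓ : ℝ) : ℂ) * ((a:ℝ):ℂ)))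
          * (starRingEnd ℂ)
            (Complex.exp (-(2 * ↑Real.pi * Complex.I * ((kval L ℓ : ℝ) : ℂ) * ((b:ℝ):ℂ))))
        = Complex.exp (-(↑Real.pi * Complex.I * ((((b:ℤ) - (a:ℤ) : ℤ)):ℂ)))
            * Complex.exp (2 * ↑Real.pi * Complex.I * ((((b:ℤ) - (a:ℤ) : ℤ)):ℂ) * ((ℓ:ℝ):ℂ) / L) := by
      intro ℓ
      rw [← Complex.exp_conj, ← Complex.exp_add, ← Complex.exp_add]
      congr 1
      simp only [kval, map_neg, map_mul, Complex.conj_I, Complex.conj_ofReal, map_ofNat]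
      push_cast
      field_simp
      ring
    simp_rw [hterm]
    rw [← Finset.mul_sum]
    have h0 : ∑ ℓ : Fin L,
        Complex.exp (2 * ↑Real.pi * Complex.I * ((((b:ℤ) - (a:ℤ) : ℤ)):ℂ) * ((ℓ:ℝ):ℂ) / L) = 0 := by
      have := sum_exp_eq_zero L hL ((b:ℤ)-(a:ℤ)) (not_dvd_sub b a (Ne.symm hab))
      simpa using this
    rw [h0, mul_zero]

lemma orthB (L : ℕ) (hL : 0 < L) (a b : Fin L) :
    ∑ ℓ : Fin L,
        Complex.exp (2 * ↑Real.pi * Complex.I * ((kval L a : ℝ) : ℂ) * ((ℓ:ℝ):ℂ))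
          * (starRingEnd ℂ)
            (Complex.exp (2 * ↑Real.pi * Complex.I * ((kval L b : ℝ) : ℂ) * ((ℓ:ℝ):ℂ)))
      = if a = b then (L:ℂ) else 0 := by
  have hLC : (L:ℂ) ≠ 0 := Nat.cast_ne_zero.mpr hL.ne'
  rcases eq_or_ne a b with rfl | hab
  · simp only [if_pos rfl]
    have h1 : ∀ ℓ : Fin L,
        Complex.exp (2 * ↑Real.pi * Complex.I * ((kval L a : ℝ) : ℂ) * ((ℓ:ℝ):ℂ))
          * (starRingEnd ℂ)
            (Complex.exp (2 * ↑Real.pi * Complex.I * ((kval L a : ℝ) : ℂ) * ((ℓ:ℝ):ℂ)))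
        = 1 := by
      intro ℓ
      rw [← Complex.exp_conj, ← Complex.exp_add]
      have h0 : (2 * ↑Real.pi * Complex.I * ((kval L a : ℝ) : ℂ) * ((ℓ:ℝ):ℂ))
          + (starRingEnd ℂ) (2 * ↑Real.pi * Complex.I * ((kval L a : ℝ) : ℂ) * ((ℓ:ℝ):ℂ)) = 0 := by
        simp only [map_mul, Complex.conj_I, Complex.conj_ofReal, map_ofNat]
        ring
      rw [h0, Complex.exp_zero]
    simp only [h1]
    simp
  · rw [if_neg hab]
    have hterm : ∀ ℓ : Fin L,
        Complex.exp (2 * ↑Real.pi * Complex.I * ((kval L a : ℝ) : ℂ) * ((ℓ:ℝ):ℂ))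
          * (starRingEnd ℂ)
            (Complex.exp (2 * ↑Real.pi * Complex.I * ((kval L b : ℝ) : ℂ) * ((ℓ:ℝ):ℂ)))
        = Complex.exp (2 * ↑Real.pi * Complex.I * ((((a:ℤ) - (b:ℤ) : ℤ)):ℂ) * ((ℓ:ℝ):ℂ) / L) := by
      intro ℓ
      rw [← Complex.exp_conj, ← Complex.exp_add]
      congr 1
      simp only [kval, map_mul, Complex.conj_I, Complex.conj_ofReal, map_ofNat]
      push_cast
      field_simp
      ring
    simp_rw [hterm]
    have := sum_exp_eq_zero L hL ((a:ℤ)-(b:ℤ)) (not_dvd_sub a b hab)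
    simpa using this


theorem blochStep_conserves_mass
    (L R : ℕ) (hL : 1 ≤ L) (hR : 1 ≤ R) (ε Δt : ℝ) (hε : 0 < ε)
    (φ : Fin L → Fin R → Fin R → ℂ) (E : Fin L → Fin R → ℝ)
    (horth₁ : ∀ j : Fin L, ∀ m n : Fin R,
      ∑ r : Fin R, φ j m r * (starRingEnd ℂ) (φ j n r) =
        if m = n then ((R : ℂ) / (2 * π)) else 0)
    (horth₂ : ∀ j : Fin L, ∀ r s : Fin R,
      ∑ m : Fin R, φ j m r * (starRingEnd ℂ) (φ j m s) =
        if r = s then ((R : ℂ) / (2 * π)) else 0)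
    (ψ : Fin L → Fin R → ℂ) :
    ∑ ℓ : Fin L, ∑ r : Fin R, ‖blochStep L R ε Δt φ E ψ ℓ r‖ ^ 2 =
      ∑ ℓ : Fin L, ∑ r : Fin R, ‖ψ ℓ r‖ ^ 2 := by
  have hL0 : 0 < L := hL
  have hR0 : 0 < R := hR
  have hLC : (L:ℂ) ≠ 0 := Nat.cast_ne_zero.mpr hL0.ne'
  have hRC : (R:ℂ) ≠ 0 := Nat.cast_ne_zero.mpr hR0.ne'
  -- step 5: inverse momentum transform
  have S5 : ∀ r : Fin R,
      ∑ ℓ : Fin L, blochStep L R ε Δt φ E ψ ℓ r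
        * (starRingEnd ℂ) (blochStep L R ε Δt φ E ψ ℓ r)
      = (1/(L:ℂ)) * ∑ j : Fin L,
          psit' L R ε Δt φ E ψ j r * (starRingEnd ℂ) (psit' L R ε Δt φ E ψ j r) := by
    intro r
    have hu : ∑ ℓ : Fin L,
        (∑ j : Fin L, psit' L R ε Δt φ E ψ j r *
          Complex.exp (2 * ↑Real.pi * Complex.I * ((kval L j : ℝ):ℂ) * ((ℓ:ℝ):ℂ)))
        * (starRingEnd ℂ)
          (∑ j : Fin L, psit' L R ε Δt φ E ψ j r *
            Complex.exp (2 * ↑Real.pi * Complex.I * ((kval L j : ℝ):ℂ) * ((ℓ:ℝ):ℂ)))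
        = (L:ℂ) * ∑ j : Fin L,
            psit' L R ε Δt φ E ψ j r * (starRingEnd ℂ) (psit' L R ε Δt φ E ψ j r) :=
      unitary_sum _ _ (fun a b => orthB L hL0 a b) _
    calc ∑ ℓ : Fin L, blochStep L R ε Δt φ E ψ ℓ r
          * (starRingEnd ℂ) (blochStep L R ε Δt φ E ψ ℓ r)
        = (1/(L:ℂ)) * (1/(L:ℂ)) * ∑ ℓ : Fin L,
            (∑ j : Fin L, psit' L R ε Δt φ E ψ j r *
              Complex.exp (2 * ↑Real.pi * Complex.I * ((kval L j : ℝ):ℂ) * ((ℓ:ℝ):ℂ)))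
            * (starRingEnd ℂ)
              (∑ j : Fin L, psit' L R ε Δt φ E ψ j r *
                Complex.exp (2 * ↑Real.pi * Complex.I * ((kval L j : ℝ):ℂ) * ((ℓ:ℝ):ℂ))) := by
          rw [Finset.mul_sum]
          refine Finset.sum_congr rfl fun ℓ _ => ?_
          rw [blochStep_eq]
          simp only [map_mul, map_div₀, map_one, map_natCast]
          ring
      _ = (1/(L:ℂ)) * (1/(L:ℂ)) * ((L:ℂ) * ∑ j : Fin L,
            psit' L R ε Δt φ E ψ j r * (starRingEnd ℂ) (psit' L R ε Δt φ E ψ j r)) := by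
          rw [hu]
      _ = (1/(L:ℂ)) * ∑ j : Fin L,
            psit' L R ε Δt φ E ψ j r * (starRingEnd ℂ) (psit' L R ε Δt φ E ψ j r) := by
          field_simp
  -- step 4: Bloch synthesis
  have S4 : ∀ j : Fin L,
      ∑ r : Fin R, psit' L R ε Δt φ E ψ j r * (starRingEnd ℂ) (psit' L R ε Δt φ E ψ j r)
      = ((R:ℂ)/(2 * ↑Real.pi)) * ∑ m : Fin R,
          Cfun' L R ε Δt φ E ψ m j * (starRingEnd ℂ) (Cfun' L R ε Δt φ E ψ m j) := by
    intro j
    simp only [psit']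
    exact unitary_sum _ _ (fun a b => horth₁ j a b) _
  -- step 3: phase factor has modulus one
  have S3 : ∀ j : Fin L, ∀ m : Fin R,
      Cfun' L R ε Δt φ E ψ m j * (starRingEnd ℂ) (Cfun' L R ε Δt φ E ψ m j)
      = Cfun L R φ ψ m j * (starRingEnd ℂ) (Cfun L R φ ψ m j) := by
    intro j m
    simp only [Cfun']
    rw [map_mul, ← Complex.exp_conj]
    have harg : (-(Complex.I * ((E j m : ℝ):ℂ) * ((Δt:ℝ):ℂ) / ((ε:ℝ):ℂ)))
        + (starRingEnd ℂ) (-(Complex.I * ((E j m : ℝ):ℂ) * ((Δt:ℝ):ℂ) / ((ε:ℝ):ℂ))) = 0 := by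
      simp only [map_neg, map_div₀, map_mul, Complex.conj_I, Complex.conj_ofReal]
      ring
    calc Cfun L R φ ψ m j * Complex.exp (-(Complex.I * ((E j m : ℝ):ℂ) * ((Δt:ℝ):ℂ) / ((ε:ℝ):ℂ)))
          * ((starRingEnd ℂ) (Cfun L R φ ψ m j) *
              Complex.exp ((starRingEnd ℂ) (-(Complex.I * ((E j m : ℝ):ℂ) * ((Δt:ℝ):ℂ) / ((ε:ℝ):ℂ)))))
        = Cfun L R φ ψ m j * (starRingEnd ℂ) (Cfun L R φ ψ m j) *
            (Complex.exp (-(Complex.I * ((E j m : ℝ):ℂ) * ((Δt:ℝ):ℂ) / ((ε:ℝ):ℂ))) *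
             Complex.exp ((starRingEnd ℂ) (-(Complex.I * ((E j m : ℝ):ℂ) * ((Δt:ℝ):ℂ) / ((ε:ℝ):ℂ))))) := by
          ring
      _ = Cfun L R φ ψ m j * (starRingEnd ℂ) (Cfun L R φ ψ m j) := by
          rw [← Complex.exp_add, harg, Complex.exp_zero, mul_one]
  -- step 2: Bloch analysis
  have S2 : ∀ j : Fin L,
      ∑ m : Fin R, Cfun L R φ ψ m j * (starRingEnd ℂ) (Cfun L R φ ψ m j)
      = (2 * ↑Real.pi / (R:ℂ)) * ∑ r : Fin R, psit L R ψ j r * (starRingEnd ℂ) (psit L R ψ j r) := by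
    intro j
    have hker : ∀ a b : Fin R,
        ∑ m : Fin R, (starRingEnd ℂ) (φ j m a) * (starRingEnd ℂ) ((starRingEnd ℂ) (φ j m b))
        = if a = b then ((R:ℂ)/(2 * ↑Real.pi)) else 0 := by
      intro a b
      calc ∑ m : Fin R, (starRingEnd ℂ) (φ j m a) * (starRingEnd ℂ) ((starRingEnd ℂ) (φ j m b))
          = (starRingEnd ℂ) (∑ m : Fin R, φ j m a * (starRingEnd ℂ) (φ j m b)) := by
            rw [map_sum]
            refine Finset.sum_congr rfl fun m _ => ?_
            simp only [map_mul, Complex.conj_conj]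
        _ = if a = b then ((R:ℂ)/(2 * ↑Real.pi)) else 0 := by
            rw [horth₂ j a b]
            rcases eq_or_ne a b with rfl | hab
            · simp [Complex.conj_ofReal, map_ofNat]
            · simp [hab]
    have hu : ∑ m : Fin R,
        (∑ r : Fin R, psit L R ψ j r * (starRingEnd ℂ) (φ j m r))
        * (starRingEnd ℂ) (∑ r : Fin R, psit L R ψ j r * (starRingEnd ℂ) (φ j m r))
        = ((R:ℂ)/(2 * ↑Real.pi)) * ∑ r : Fin R, psit L R ψ j r * (starRingEnd ℂ) (psit L R ψ j r) :=
      unitary_sum _ _ hker _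
    have h2π : (2 * ((Real.pi:ℝ):ℂ)) ≠ 0 := by
      simp [Real.pi_ne_zero]
    calc ∑ m : Fin R, Cfun L R φ ψ m j * (starRingEnd ℂ) (Cfun L R φ ψ m j)
        = (2 * ((Real.pi:ℝ):ℂ) / R) * (2 * ((Real.pi:ℝ):ℂ) / R) * ∑ m : Fin R,
            (∑ r : Fin R, psit L R ψ j r * (starRingEnd ℂ) (φ j m r))
            * (starRingEnd ℂ) (∑ r : Fin R, psit L R ψ j r * (starRingEnd ℂ) (φ j m r)) := by
          rw [Finset.mul_sum]
          refine Finset.sum_congr rfl fun m _ => ?_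
          simp only [Cfun]
          simp only [map_mul, map_div₀, map_ofNat, Complex.conj_ofReal, map_natCast]
          ring
      _ = (2 * ((Real.pi:ℝ):ℂ) / R) * (2 * ((Real.pi:ℝ):ℂ) / R) *
            (((R:ℂ)/(2 * ↑Real.pi)) * ∑ r : Fin R, psit L R ψ j r * (starRingEnd ℂ) (psit L R ψ j r)) := by
          rw [hu]
      _ = (2 * ↑Real.pi / (R:ℂ)) * ∑ r : Fin R, psit L R ψ j r * (starRingEnd ℂ) (psit L R ψ j r) := by
          field_simp
  -- step 1: forward momentum transform
  have S1 : ∀ r : Fin R,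
      ∑ ℓ : Fin L, psit L R ψ ℓ r * (starRingEnd ℂ) (psit L R ψ ℓ r)
      = (L:ℂ) * ∑ j : Fin L, ψ j r * (starRingEnd ℂ) (ψ j r) := by
    intro r
    simp only [psit]
    exact unitary_sum _ _ (fun a b => orthA L hL0 a b) _
  -- assemble the complex identity
  have key : ∑ ℓ : Fin L, ∑ r : Fin R,
      blochStep L R ε Δt φ E ψ ℓ r * (starRingEnd ℂ) (blochStep L R ε Δt φ E ψ ℓ r)
      = ∑ ℓ : Fin L, ∑ r : Fin R, ψ ℓ r * (starRingEnd ℂ) (ψ ℓ r) := by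
    rw [Finset.sum_comm]
    calc ∑ r : Fin R, ∑ ℓ : Fin L,
          blochStep L R ε Δt φ E ψ ℓ r * (starRingEnd ℂ) (blochStep L R ε Δt φ E ψ ℓ r)
        = ∑ r : Fin R, (1/(L:ℂ)) * ∑ j : Fin L,
            psit' L R ε Δt φ E ψ j r * (starRingEnd ℂ) (psit' L R ε Δt φ E ψ j r) :=
          Finset.sum_congr rfl fun r _ => S5 r
      _ = (1/(L:ℂ)) * ∑ j : Fin L, ∑ r : Fin R,
            psit' L R ε Δt φ E ψ j r * (starRingEnd ℂ) (psit' L R ε Δt φ E ψ j r) := by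
          rw [← Finset.mul_sum, Finset.sum_comm]
      _ = (1/(L:ℂ)) * ∑ j : Fin L, ((R:ℂ)/(2 * ↑Real.pi)) * ∑ m : Fin R,
            Cfun' L R ε Δt φ E ψ m j * (starRingEnd ℂ) (Cfun' L R ε Δt φ E ψ m j) := by
          rw [Finset.mul_sum, Finset.mul_sum]
          exact Finset.sum_congr rfl fun j _ => by rw [S4 j]
      _ = (1/(L:ℂ)) * ∑ j : Fin L, ((R:ℂ)/(2 * ↑Real.pi)) * ∑ m : Fin R,
            Cfun L R φ ψ m j * (starRingEnd ℂ) (Cfun L R φ ψ m j) := by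
          rw [Finset.mul_sum, Finset.mul_sum]
          refine Finset.sum_congr rfl fun j _ => ?_
          rw [Finset.sum_congr rfl fun m _ => S3 j m]
      _ = (1/(L:ℂ)) * ∑ j : Fin L,
            ∑ r : Fin R, psit L R ψ j r * (starRingEnd ℂ) (psit L R ψ j r) := by
          rw [Finset.mul_sum, Finset.mul_sum]
          refine Finset.sum_congr rfl fun j _ => ?_
          rw [S2 j]
          have hπ : ((Real.pi:ℝ):ℂ) ≠ 0 := Complex.ofReal_ne_zero.mpr Real.pi_ne_zero
          field_simp
      _ = (1/(L:ℂ)) * ∑ r : Fin R,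
            ∑ ℓ : Fin L, psit L R ψ ℓ r * (starRingEnd ℂ) (psit L R ψ ℓ r) := by
          rw [Finset.sum_comm]
      _ = (1/(L:ℂ)) * ∑ r : Fin R,
            (L:ℂ) * ∑ j : Fin L, ψ j r * (starRingEnd ℂ) (ψ j r) := by
          congr 1
          exact Finset.sum_congr rfl fun r _ => S1 r
      _ = ∑ r : Fin R, ∑ ℓ : Fin L, ψ ℓ r * (starRingEnd ℂ) (ψ ℓ r) := by
          rw [← Finset.mul_sum, ← mul_assoc]
          field_simp
      _ = ∑ ℓ : Fin L, ∑ r : Fin R, ψ ℓ r * (starRingEnd ℂ) (ψ ℓ r) := Finset.sum_comm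
  -- pass from the complex identity to the real one
  have habs : ∀ z : ℂ, ((‖z‖ ^ 2 : ℝ) : ℂ) = z * (starRingEnd ℂ) z := by
    intro z
    rw [Complex.sq_norm, Complex.mul_conj]
  apply Complex.ofReal_injective
  calc ((∑ ℓ : Fin L, ∑ r : Fin R, ‖blochStep L R ε Δt φ E ψ ℓ r‖ ^ 2 : ℝ):ℂ)
      = ∑ ℓ : Fin L, ∑ r : Fin R,
          blochStep L R ε Δt φ E ψ ℓ r * (starRingEnd ℂ) (blochStep L R ε Δt φ E ψ ℓ r) := by
        rw [Complex.ofReal_sum]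
        refine Finset.sum_congr rfl fun ℓ _ => ?_
        rw [Complex.ofReal_sum]
        exact Finset.sum_congr rfl fun r _ => habs _
    _ = ∑ ℓ : Fin L, ∑ r : Fin R, ψ ℓ r * (starRingEnd ℂ) (ψ ℓ r) := key
    _ = ((∑ ℓ : Fin L, ∑ r : Fin R, ‖ψ ℓ r‖ ^ 2 : ℝ):ℂ) := by
        rw [Complex.ofReal_sum]
        refine Finset.sum_congr rfl fun ℓ _ => ?_
        rw [Complex.ofReal_sum]
        exact Finset.sum_congr rfl fun r _ => (habs _).symm
end

section
/- Under the hypotheses on the Bloch-decomposition step B_{Δt}, let U : {0,…,L−1}×{0,…,R−1} → ℝ be a real-valued external potential evaluated on the grid, and consider the full one-step Bloch decomposition-based time-splitting map: given ψ : {0,…,L−1}×{0,…,R−1} → ℂ, first set ψ' = B_{Δt}(ψ) and then ψ''(ℓ,r) = ψ'(ℓ,r)·exp(−i·U(ℓ,r)·Δt/ε). Then ∑_{ℓ=0}^{L−1}∑_{r=0}^{R−1} |ψ''(ℓ,r)|² = ∑_{ℓ=0}^{L−1}∑_{r=0}^{R−1} |ψ(ℓ,r)|²; i.e., the deterministic Bloch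 decomposition-based time-splitting scheme conserves the total mass on the fully discrete level. -/
open Complex Finset Real


section BlochAux

lemma bloch_transform_norm {ι κ : Type*} [Fintype ι] [Fintype κ] [DecidableEq κ]
    (M : ι → κ → ℂ) (c : ℂ)
    (h : ∀ a b : κ, ∑ i, M i a * (starRingEnd ℂ) (M i b) = if a = b then c else 0)
    (f : κ → ℂ) :
    ∑ i, (∑ k, f k * M i k) * (starRingEnd ℂ) (∑ k, f k * M i k) =
      c * (∑ k, f k * (starRingEnd ℂ) (f k)) := by
  have e : ∀ i : ι, (∑ k, f k * M i k) * (starRingEnd ℂ) (∑ k, f k * M i k)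
      = ∑ k, ∑ k', (f k * (starRingEnd ℂ) (f k')) * (M i k * (starRingEnd ℂ) (M i k')) := by
    intro i
    rw [map_sum, Finset.sum_mul_sum]
    exact Finset.sum_congr rfl fun k _ => Finset.sum_congr rfl fun k' _ => by
      rw [map_mul]; ring
  calc ∑ i : ι, (∑ k, f k * M i k) * (starRingEnd ℂ) (∑ k, f k * M i k)
      = ∑ k, ∑ k', (f k * (starRingEnd ℂ) (f k')) * ∑ i, (M i k * (starRingEnd ℂ) (M i k')) := by
        simp only [e]
        rw [Finset.sum_comm]
        refine Finset.sum_congr rfl fun k _ => ?_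
        rw [Finset.sum_comm]
        exact Finset.sum_congr rfl fun k' _ => (Finset.mul_sum _ _ _).symm
    _ = c * (∑ k, f k * (starRingEnd ℂ) (f k)) := by
        simp only [h, mul_ite, mul_zero, Finset.sum_ite_eq, Finset.mem_univ, if_true]
        rw [Finset.mul_sum]
        exact Finset.sum_congr rfl fun k _ => by ring

lemma bloch_root_sum (L : ℕ) (hL : 0 < L) (a b : Fin L) :
    ∑ ℓ ∈ Finset.range L, (Complex.exp (2 * π * Complex.I * ((((a:ℤ) - (b:ℤ)) : ℤ) : ℂ) / L)) ^ ℓ =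
      if a = b then (L : ℂ) else 0 := by
  set d : ℤ := (a:ℤ) - (b:ℤ) with hd
  by_cases hab : a = b
  · subst hab
    simp [hd, Finset.sum_const]
  · have hdne : d ≠ 0 := sub_ne_zero.mpr (by exact_mod_cast fun h => hab (Fin.ext (by exact_mod_cast h)))
    have hLne : (L:ℂ) ≠ 0 := Nat.cast_ne_zero.mpr hL.ne'
    have hζ : Complex.exp (2 * π * Complex.I * (d : ℂ) / L) ≠ 1 := by
      intro h
      obtain ⟨n, hn⟩ := Complex.exp_eq_one_iff.mp h
      have : (d : ℂ) = n * L := by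
        field_simp at hn
        have h2 : (2 : ℂ) * π * Complex.I ≠ 0 :=
          mul_ne_zero (mul_ne_zero two_ne_zero (Complex.ofReal_ne_zero.mpr Real.pi_ne_zero)) Complex.I_ne_zero
        apply mul_left_cancel₀ h2
        rw [hn]; ring
      have hdz : d = n * L := by exact_mod_cast this
      have h1 : |d| < L := by
        have ha : (a:ℤ) < L := by exact_mod_cast a.isLt
        have hb : (b:ℤ) < L := by exact_mod_cast b.isLt
        have ha0 : (0:ℤ) ≤ a := Int.ofNat_nonneg _
        have hb0 : (0:ℤ) ≤ b := Int.ofNat_nonneg _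
        rw [hd, abs_lt]
        omega
      rcases eq_or_ne n 0 with rfl | hn0
      · simp at hdz; exact hdne hdz
      · have : (L:ℤ) ≤ |d| := by
          rw [hdz, abs_mul]
          calc (L:ℤ) = 1 * L := (one_mul _).symm
          _ ≤ |n| * |(L:ℤ)| := by
              apply mul_le_mul (Int.one_le_abs hn0) (le_abs_self _) (by positivity) (abs_nonneg _)
        omega
    have hpow : Complex.exp (2 * π * Complex.I * (d : ℂ) / L) ^ L = 1 := by
      rw [← Complex.exp_nat_mul]
      have : (L : ℂ) * (2 * π * Complex.I * (d : ℂ) / L) = d * (2 * π * Complex.I) := by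
        field_simp
      rw [this, Complex.exp_int_mul_two_pi_mul_I]
    rw [geom_sum_eq hζ, hpow, if_neg hab]
    simp

lemma bloch_fourier_orth₁ (L : ℕ) (hL : 0 < L) (a b : Fin L) :
    ∑ ℓ : Fin L, Complex.exp (-(2 * π * Complex.I * ((-(1/2:ℝ) + (ℓ:ℝ)/L) : ℝ) * (a:ℝ))) *
      (starRingEnd ℂ) (Complex.exp (-(2 * π * Complex.I * ((-(1/2:ℝ) + (ℓ:ℝ)/L):ℝ) * (b:ℝ)))) =
    if a = b then (L:ℂ) else 0 := by
  have hLne : (L:ℂ) ≠ 0 := Nat.cast_ne_zero.mpr hL.ne'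
  have key : ∀ ℓ : Fin L,
      Complex.exp (-(2 * π * Complex.I * ((-(1/2:ℝ) + (ℓ:ℝ)/L) : ℝ) * (a:ℝ))) *
        (starRingEnd ℂ) (Complex.exp (-(2 * π * Complex.I * ((-(1/2:ℝ) + (ℓ:ℝ)/L):ℝ) * (b:ℝ)))) =
      Complex.exp (-(π * Complex.I * ((((b:ℤ) - (a:ℤ)):ℤ):ℂ))) *
        (Complex.exp (2 * π * Complex.I * ((((b:ℤ) - (a:ℤ)):ℤ):ℂ) / L)) ^ (ℓ:ℕ) := by
    intro ℓ
    rw [← Complex.exp_conj, ← Complex.exp_nat_mul, ← Complex.exp_add, ← Complex.exp_add]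
    congr 1
    simp only [map_neg, map_mul, Complex.conj_I, Complex.conj_ofReal, map_ofNat]
    push_cast
    field_simp
    ring
  rw [Finset.sum_congr rfl (fun ℓ _ => key ℓ), ← Finset.mul_sum,
    Fin.sum_univ_eq_sum_range (fun ℓ => (Complex.exp (2 * π * Complex.I * ((((b:ℤ) - (a:ℤ)):ℤ):ℂ) / L)) ^ ℓ) L,
    bloch_root_sum L hL b a]
  by_cases hab : a = b
  · subst hab; simp
  · simp [hab, Ne.symm hab]

lemma bloch_fourier_orth₂ (L : ℕ) (hL : 0 < L) (a b : Fin L) :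
    ∑ ℓ : Fin L, ((1/(L:ℂ)) * Complex.exp (2 * π * Complex.I * ((-(1/2:ℝ) + (a:ℝ)/L):ℝ) * (ℓ:ℝ))) *
      (starRingEnd ℂ) ((1/(L:ℂ)) * Complex.exp (2 * π * Complex.I * ((-(1/2:ℝ)+(b:ℝ)/L):ℝ) * (ℓ:ℝ))) =
    if a = b then (1/(L:ℂ)) else 0 := by
  have hLne : (L:ℂ) ≠ 0 := Nat.cast_ne_zero.mpr hL.ne'
  have key : ∀ ℓ : Fin L,
      ((1/(L:ℂ)) * Complex.exp (2 * π * Complex.I * ((-(1/2:ℝ) + (a:ℝ)/L):ℝ) * (ℓ:ℝ))) *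
        (starRingEnd ℂ) ((1/(L:ℂ)) * Complex.exp (2 * π * Complex.I * ((-(1/2:ℝ)+(b:ℝ)/L):ℝ) * (ℓ:ℝ))) =
      (1/(L:ℂ))^2 * (Complex.exp (2 * π * Complex.I * ((((a:ℤ) - (b:ℤ)):ℤ):ℂ) / L)) ^ (ℓ:ℕ) := by
    intro ℓ
    rw [map_mul, ← Complex.exp_conj, ← Complex.exp_nat_mul]
    rw [show ((1/(L:ℂ)) * Complex.exp (2 * π * Complex.I * ((-(1/2:ℝ) + (a:ℝ)/L):ℝ) * (ℓ:ℝ))) *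
        ((starRingEnd ℂ) (1/(L:ℂ)) * Complex.exp ((starRingEnd ℂ) (2 * π * Complex.I * ((-(1/2:ℝ)+(b:ℝ)/L):ℝ) * (ℓ:ℝ)))) =
        ((1/(L:ℂ)) * (starRingEnd ℂ) (1/(L:ℂ))) *
          (Complex.exp (2 * π * Complex.I * ((-(1/2:ℝ) + (a:ℝ)/L):ℝ) * (ℓ:ℝ)) *
           Complex.exp ((starRingEnd ℂ) (2 * π * Complex.I * ((-(1/2:ℝ)+(b:ℝ)/L):ℝ) * (ℓ:ℝ)))) from by ring,
      ← Complex.exp_add]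
    congr 1
    · simp [Complex.conj_ofReal, sq]
    · congr 1
      simp only [map_mul, Complex.conj_I, Complex.conj_ofReal, map_ofNat]
      push_cast
      field_simp
      ring
  rw [Finset.sum_congr rfl (fun ℓ _ => key ℓ), ← Finset.mul_sum,
    Fin.sum_univ_eq_sum_range (fun ℓ => (Complex.exp (2 * π * Complex.I * ((((a:ℤ) - (b:ℤ)):ℤ):ℂ) / L)) ^ ℓ) L,
    bloch_root_sum L hL a b]
  by_cases hab : a = b
  · subst hab
    simp only [if_pos rfl, if_true]
    field_simp
  · simp [hab]

end BlochAux

noncomputable section BlochDefs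
variable (L R : ℕ) (ε Δt : ℝ) (φ : Fin L → Fin R → Fin R → ℂ) (E : Fin L → Fin R → ℝ)
  (ψ : Fin L → Fin R → ℂ)

def bKK (ℓ : Fin L) : ℝ := -(1/2 : ℝ) + (ℓ : ℝ) / L

def bPsiT (ℓ : Fin L) (r : Fin R) : ℂ :=
  ∑ j : Fin L, ψ j r * Complex.exp (-(2 * π * Complex.I * (bKK L ℓ) * (j : ℝ)))

def bC (m : Fin R) (ℓ : Fin L) : ℂ :=
  (2 * (π : ℂ) / R) * ∑ r : Fin R, bPsiT L R ψ ℓ r * (starRingEnd ℂ) (φ ℓ m r)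

def bC' (m : Fin R) (ℓ : Fin L) : ℂ :=
  bC L R φ ψ m ℓ * Complex.exp (-(Complex.I * (E ℓ m) * Δt / ε))

def bPsiT' (ℓ : Fin L) (r : Fin R) : ℂ :=
  ∑ m : Fin R, bC' L R ε Δt φ E ψ m ℓ * φ ℓ m r

end BlochDefs

set_option maxHeartbeats 1000000 in
theorem bloch_time_splitting_conserves_mass
    (L R : ℕ) (hL : 1 ≤ L) (hR : 1 ≤ R) (ε Δt : ℝ) (hε : 0 < ε)
    (φ : Fin L → Fin R → Fin R → ℂ) (E : Fin L → Fin R → ℝ)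
    (horth₁ : ∀ j : Fin L, ∀ m n : Fin R,
      ∑ r : Fin R, φ j m r * (starRingEnd ℂ) (φ j n r) =
        if m = n then ((R : ℂ) / (2 * π)) else 0)
    (horth₂ : ∀ j : Fin L, ∀ r s : Fin R,
      ∑ m : Fin R, φ j m r * (starRingEnd ℂ) (φ j m s) =
        if r = s then ((R : ℂ) / (2 * π)) else 0)
    (U : Fin L → Fin R → ℝ)
    (ψ : Fin L → Fin R → ℂ) :
    ∑ ℓ : Fin L, ∑ r : Fin R,
        ‖blochStep L R ε Δt φ E ψ ℓ r *
          Complex.exp (-(Complex.I * (U ℓ r) * Δt / ε))‖ ^ 2 =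
      ∑ ℓ : Fin L, ∑ r : Fin R, ‖ψ ℓ r‖ ^ 2 := by
  have hL0 : 0 < L := hL
  have hR0 : 0 < R := hR
  have hLne : (L:ℂ) ≠ 0 := Nat.cast_ne_zero.mpr hL0.ne'
  have hRne : (R:ℂ) ≠ 0 := Nat.cast_ne_zero.mpr hR0.ne'
  have hπne : (π:ℂ) ≠ 0 := Complex.ofReal_ne_zero.mpr Real.pi_ne_zero
  -- the potential phase has modulus one
  have hphase : ∀ t : ℝ, ‖Complex.exp (-(Complex.I * (t:ℂ) * Δt / ε))‖ = 1 := by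
    intro t
    rw [show -(Complex.I * (t:ℂ) * Δt / ε) = ((-(t * Δt / ε) : ℝ) : ℂ) * Complex.I by
      push_cast; ring]
    exact Complex.norm_exp_ofReal_mul_I _
  simp only [norm_mul, hphase, mul_one]
  -- reduce to a statement about complex sums z * conj z
  have key : ∑ ℓ : Fin L, ∑ r : Fin R,
      blochStep L R ε Δt φ E ψ ℓ r * (starRingEnd ℂ) (blochStep L R ε Δt φ E ψ ℓ r) =
      ∑ ℓ : Fin L, ∑ r : Fin R, ψ ℓ r * (starRingEnd ℂ) (ψ ℓ r) := by
    -- unfold blochStep into the auxiliary definitions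
    have hB : ∀ ℓ r, blochStep L R ε Δt φ E ψ ℓ r =
        ∑ j : Fin L, bPsiT' L R ε Δt φ E ψ j r *
          ((1/(L:ℂ)) * Complex.exp (2 * π * Complex.I * (bKK L j : ℝ) * (ℓ : ℝ))) := by
      intro ℓ r
      have h0 : blochStep L R ε Δt φ E ψ ℓ r = (1 / (L : ℂ)) *
          ∑ j : Fin L, bPsiT' L R ε Δt φ E ψ j r *
            Complex.exp (2 * π * Complex.I * (bKK L j : ℝ) * (ℓ : ℝ)) := by
        simp only [blochStep, bPsiT', bC', bC, bPsiT, bKK]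
      rw [h0, Finset.mul_sum]
      exact Finset.sum_congr rfl fun j _ => by ring
    -- step 5 (inverse Fourier with 1/L)
    have h5 : ∀ r : Fin R, ∑ ℓ : Fin L,
        blochStep L R ε Δt φ E ψ ℓ r * (starRingEnd ℂ) (blochStep L R ε Δt φ E ψ ℓ r) =
        (1/(L:ℂ)) * ∑ j : Fin L, bPsiT' L R ε Δt φ E ψ j r *
          (starRingEnd ℂ) (bPsiT' L R ε Δt φ E ψ j r) := by
      intro r
      simp only [hB]
      exact bloch_transform_norm
        (fun ℓ j : Fin L => (1/(L:ℂ)) * Complex.exp (2 * π * Complex.I * (bKK L j : ℝ) * (ℓ : ℝ)))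
        (1/(L:ℂ)) (fun a b => bloch_fourier_orth₂ L hL0 a b)
        (fun j => bPsiT' L R ε Δt φ E ψ j r)
    -- step 4 (synthesis with Bloch eigenfunctions)
    have h4 : ∀ j : Fin L, ∑ r : Fin R,
        bPsiT' L R ε Δt φ E ψ j r * (starRingEnd ℂ) (bPsiT' L R ε Δt φ E ψ j r) =
        ((R:ℂ)/(2*π)) * ∑ m : Fin R, bC' L R ε Δt φ E ψ m j *
          (starRingEnd ℂ) (bC' L R ε Δt φ E ψ m j) := by
      intro j
      exact bloch_transform_norm (fun r m => φ j m r) ((R:ℂ)/(2*π))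
        (fun a b => horth₁ j a b) (fun m => bC' L R ε Δt φ E ψ m j)
    -- step 3 (band-energy phase, modulus one)
    have h3 : ∀ j : Fin L, ∀ m : Fin R,
        bC' L R ε Δt φ E ψ m j * (starRingEnd ℂ) (bC' L R ε Δt φ E ψ m j) =
        bC L R φ ψ m j * (starRingEnd ℂ) (bC L R φ ψ m j) := by
      intro j m
      unfold bC'
      rw [map_mul, ← Complex.exp_conj]
      have : (starRingEnd ℂ) (-(Complex.I * ((E j m : ℝ) : ℂ) * Δt / ε)) =
          Complex.I * ((E j m : ℝ) : ℂ) * Δt / ε := by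
        simp only [map_neg, map_div₀, map_mul, Complex.conj_I, Complex.conj_ofReal]
        ring
      rw [this]
      rw [show bC L R φ ψ m j * Complex.exp (-(Complex.I * ((E j m : ℝ):ℂ) * Δt / ε)) *
          ((starRingEnd ℂ) (bC L R φ ψ m j) * Complex.exp (Complex.I * ((E j m : ℝ):ℂ) * Δt / ε)) =
          bC L R φ ψ m j * (starRingEnd ℂ) (bC L R φ ψ m j) *
            (Complex.exp (-(Complex.I * ((E j m : ℝ):ℂ) * Δt / ε)) *
             Complex.exp (Complex.I * ((E j m : ℝ):ℂ) * Δt / ε)) from by ring,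
        ← Complex.exp_add]
      simp
    -- step 2 (analysis with Bloch eigenfunctions, factor 2π/R)
    have h2 : ∀ j : Fin L, ∑ m : Fin R,
        bC L R φ ψ m j * (starRingEnd ℂ) (bC L R φ ψ m j) =
        (2*(π:ℂ)/R) * ∑ r : Fin R, bPsiT L R ψ j r * (starRingEnd ℂ) (bPsiT L R ψ j r) := by
      intro j
      have hrw : ∀ m : Fin R, bC L R φ ψ m j =
          ∑ r : Fin R, bPsiT L R ψ j r * ((2*(π:ℂ)/R) * (starRingEnd ℂ) (φ j m r)) := by
        intro m
        unfold bC
        rw [Finset.mul_sum]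
        exact Finset.sum_congr rfl fun r _ => by ring
      simp only [hrw]
      apply bloch_transform_norm (fun m r => (2*(π:ℂ)/R) * (starRingEnd ℂ) (φ j m r)) (2*(π:ℂ)/R)
      intro a b
      have : ∀ m : Fin R, (2*(π:ℂ)/R) * (starRingEnd ℂ) (φ j m a) *
          (starRingEnd ℂ) ((2*(π:ℂ)/R) * (starRingEnd ℂ) (φ j m b)) =
          ((2*(π:ℂ)/R) * (2*(π:ℂ)/R)) * (φ j m b * (starRingEnd ℂ) (φ j m a)) := by
        intro m
        rw [map_mul, Complex.conj_conj]
        rw [show (starRingEnd ℂ) (2*(π:ℂ)/R) = 2*(π:ℂ)/R by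
          simp [map_div₀, map_mul, Complex.conj_ofReal, map_ofNat, map_natCast]]
        ring
      rw [Finset.sum_congr rfl fun m _ => this m, ← Finset.mul_sum, horth₂ j b a]
      by_cases hab : a = b
      · subst hab
        rw [if_pos rfl, if_pos rfl]
        field_simp
      · rw [if_neg (Ne.symm hab), if_neg hab, mul_zero]
    -- step 1 (Fourier in quasi-momentum, factor L)
    have h1 : ∀ r : Fin R, ∑ ℓ : Fin L,
        bPsiT L R ψ ℓ r * (starRingEnd ℂ) (bPsiT L R ψ ℓ r) =
        (L:ℂ) * ∑ j : Fin L, ψ j r * (starRingEnd ℂ) (ψ j r) := by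
      intro r
      exact bloch_transform_norm
        (fun ℓ j : Fin L => Complex.exp (-(2 * π * Complex.I * (bKK L ℓ : ℝ) * (j : ℝ)))) (L:ℂ)
        (fun a b => bloch_fourier_orth₁ L hL0 a b) (fun j => ψ j r)
    -- chain everything together
    calc ∑ ℓ : Fin L, ∑ r : Fin R,
          blochStep L R ε Δt φ E ψ ℓ r * (starRingEnd ℂ) (blochStep L R ε Δt φ E ψ ℓ r)
        = ∑ r : Fin R, ∑ ℓ : Fin L,
          blochStep L R ε Δt φ E ψ ℓ r * (starRingEnd ℂ) (blochStep L R ε Δt φ E ψ ℓ r) :=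
          Finset.sum_comm
      _ = ∑ r : Fin R, (1/(L:ℂ)) * ∑ j : Fin L, bPsiT' L R ε Δt φ E ψ j r *
            (starRingEnd ℂ) (bPsiT' L R ε Δt φ E ψ j r) :=
          Finset.sum_congr rfl fun r _ => h5 r
      _ = (1/(L:ℂ)) * ∑ r : Fin R, ∑ j : Fin L, bPsiT' L R ε Δt φ E ψ j r *
            (starRingEnd ℂ) (bPsiT' L R ε Δt φ E ψ j r) := (Finset.mul_sum _ _ _).symm
      _ = (1/(L:ℂ)) * ∑ j : Fin L, ∑ r : Fin R, bPsiT' L R ε Δt φ E ψ j r *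
            (starRingEnd ℂ) (bPsiT' L R ε Δt φ E ψ j r) := by rw [Finset.sum_comm]
      _ = (1/(L:ℂ)) * ∑ j : Fin L, ((R:ℂ)/(2*π)) * ∑ m : Fin R,
            bC' L R ε Δt φ E ψ m j * (starRingEnd ℂ) (bC' L R ε Δt φ E ψ m j) := by
          rw [Finset.sum_congr rfl fun j _ => h4 j]
      _ = (1/(L:ℂ)) * ∑ j : Fin L, ((R:ℂ)/(2*π)) * ∑ m : Fin R,
            bC L R φ ψ m j * (starRingEnd ℂ) (bC L R φ ψ m j) := by
          refine congrArg _ (Finset.sum_congr rfl fun j _ => congrArg _ ?_)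
          exact Finset.sum_congr rfl fun m _ => h3 j m
      _ = (1/(L:ℂ)) * ∑ j : Fin L, ((R:ℂ)/(2*π)) * ((2*(π:ℂ)/R) * ∑ r : Fin R,
            bPsiT L R ψ j r * (starRingEnd ℂ) (bPsiT L R ψ j r)) := by
          refine congrArg _ (Finset.sum_congr rfl fun j _ => congrArg _ ?_)
          exact h2 j
      _ = ∑ j : Fin L, (1/(L:ℂ)) * ∑ r : Fin R,
            bPsiT L R ψ j r * (starRingEnd ℂ) (bPsiT L R ψ j r) := by
          rw [Finset.mul_sum]
          refine Finset.sum_congr rfl fun j _ => ?_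
          field_simp
      _ = (1/(L:ℂ)) * ∑ r : Fin R, ∑ ℓ : Fin L,
            bPsiT L R ψ ℓ r * (starRingEnd ℂ) (bPsiT L R ψ ℓ r) := by
          rw [← Finset.mul_sum, Finset.sum_comm]
      _ = (1/(L:ℂ)) * ∑ r : Fin R, (L:ℂ) * ∑ j : Fin L, ψ j r * (starRingEnd ℂ) (ψ j r) := by
          rw [Finset.sum_congr rfl fun r _ => h1 r]
      _ = ∑ r : Fin R, ∑ j : Fin L, ψ j r * (starRingEnd ℂ) (ψ j r) := by
          rw [Finset.mul_sum]
          refine Finset.sum_congr rfl fun r _ => ?_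
          field_simp
      _ = ∑ ℓ : Fin L, ∑ r : Fin R, ψ ℓ r * (starRingEnd ℂ) (ψ ℓ r) := Finset.sum_comm
  -- pass from complex sums back to real sums of |·|²
  simp only [Complex.mul_conj] at key
  have : ((∑ ℓ : Fin L, ∑ r : Fin R, Complex.normSq (blochStep L R ε Δt φ E ψ ℓ r) : ℝ) : ℂ) =
      ((∑ ℓ : Fin L, ∑ r : Fin R, Complex.normSq (ψ ℓ r) : ℝ) : ℂ) := by
    push_cast
    exact key
  have hre := Complex.ofReal_injective this
  simpa only [Complex.sq_norm] using hre
end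

section
/- Under the hypotheses on the Bloch-decomposition step B_{Δt}, the scheme is time reversible in the following sense: for every ψ : {0,…,L−1}×{0,…,R−1} → ℂ, applying the step with time increment Δt and then the step with time increment −Δt recovers ψ, i.e., B_{−Δt}(B_{Δt}(ψ)) = ψ. -/
open Complex Finset Real

/-! ### Auxiliary definitions and lemmas -/

/-- Positive discrete Fourier kernel `exp(2πi k_j y_i)`. -/
noncomputable def Ep {L : ℕ} (j i : Fin L) : ℂ :=
  Complex.exp (2 * π * Complex.I * ((-(1/2 : ℝ) + (j : ℝ) / L : ℝ) : ℂ) * ((i : ℝ) : ℂ))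

/-- Negative discrete Fourier kernel `exp(-2πi k_j y_i)`. -/
noncomputable def En {L : ℕ} (j i : Fin L) : ℂ :=
  Complex.exp (-(2 * π * Complex.I * ((-(1/2 : ℝ) + (j : ℝ) / L : ℝ) : ℂ) * ((i : ℝ) : ℂ)))

lemma geom_core (L : ℕ) (hL : 1 ≤ L) (n : ℤ) (hn : n.natAbs < L) :
    ∑ j ∈ Finset.range L, (Complex.exp (2 * π * Complex.I * n / L)) ^ j =
      if n = 0 then (L : ℂ) else 0 := by
  by_cases h : n = 0
  · subst h; simp
  · rw [if_neg h]
    have hL0 : (L : ℂ) ≠ 0 := Nat.cast_ne_zero.mpr (by omega)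
    have hw : Complex.exp (2 * π * Complex.I * n / L) ≠ 1 := by
      intro h1
      rw [Complex.exp_eq_one_iff] at h1
      obtain ⟨m, hm⟩ := h1
      have h2 : (2 * (π : ℂ) * Complex.I) ≠ 0 := by
        simp [Real.pi_ne_zero, Complex.I_ne_zero]
      have hnm : (n : ℂ) = (m : ℂ) * L := by
        field_simp at hm
        exact mul_left_cancel₀ h2 (by linear_combination (2 * (π : ℂ) * Complex.I) * hm)
      have hnm' : n = m * L := by exact_mod_cast hnm
      have h3 : n.natAbs = m.natAbs * L := by
        rw [hnm', Int.natAbs_mul]; simp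
      have h4 : m.natAbs ≠ 0 := by
        intro h0; rw [h0] at h3; simp at h3; exact h h3
      have h5 : L ≤ m.natAbs * L := Nat.le_mul_of_pos_left L (by omega)
      omega
    rw [geom_sum_eq hw]
    have hpow : Complex.exp (2 * π * Complex.I * n / L) ^ L = 1 := by
      rw [← Complex.exp_nat_mul]
      have : (L : ℂ) * (2 * π * Complex.I * n / L) = n * (2 * π * Complex.I) := by
        field_simp
      rw [this, Complex.exp_int_mul_two_pi_mul_I]
    rw [hpow]; simp

/-- Orthogonality of the Fourier kernels, summing over the momentum index. -/
lemma ker_mom (L : ℕ) (hL : 1 ≤ L) (a b : Fin L) :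
    ∑ j : Fin L, Ep j a * En j b = if a = b then (L : ℂ) else 0 := by
  have hL0 : (L : ℂ) ≠ 0 := Nat.cast_ne_zero.mpr (by omega)
  set n : ℤ := (a : ℤ) - (b : ℤ) with hn
  have hterm : ∀ j : Fin L, Ep j a * En j b =
      Complex.exp (-(π * Complex.I * n)) * (Complex.exp (2 * π * Complex.I * n / L)) ^ (j : ℕ) := by
    intro j
    rw [Ep, En, ← Complex.exp_nat_mul, ← Complex.exp_add, ← Complex.exp_add]
    congr 1
    rw [hn]
    push_cast
    field_simp
    ring
  calc ∑ j : Fin L, Ep j a * En j b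
      = ∑ j : Fin L, Complex.exp (-(π * Complex.I * n)) * (Complex.exp (2 * π * Complex.I * n / L)) ^ (j : ℕ) :=
        Finset.sum_congr rfl (fun j _ => hterm j)
    _ = Complex.exp (-(π * Complex.I * n)) * ∑ j ∈ Finset.range L, (Complex.exp (2 * π * Complex.I * n / L)) ^ j := by
        rw [Finset.mul_sum, Fin.sum_univ_eq_sum_range (fun j => Complex.exp (-(π * Complex.I * n)) * (Complex.exp (2 * π * Complex.I * n / L)) ^ j) L]
    _ = if a = b then (L : ℂ) else 0 := by
        rw [geom_core L hL n (by omega)]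
        by_cases h : a = b
        · have : n = 0 := by simp [hn, h]
          simp [h, this]
        · have : n ≠ 0 := by
            simp only [hn, sub_ne_zero]
            exact_mod_cast fun hh => h (Fin.ext (by exact_mod_cast hh))
          simp [h, this]

/-- Orthogonality of the Fourier kernels, summing over the spatial index. -/
lemma ker_sp (L : ℕ) (hL : 1 ≤ L) (a b : Fin L) :
    ∑ i : Fin L, Ep a i * En b i = if a = b then (L : ℂ) else 0 := by
  have hL0 : (L : ℂ) ≠ 0 := Nat.cast_ne_zero.mpr (by omega)
  set n : ℤ := (a : ℤ) - (b : ℤ) with hn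
  have hterm : ∀ i : Fin L, Ep a i * En b i =
      (Complex.exp (2 * π * Complex.I * n / L)) ^ (i : ℕ) := by
    intro i
    rw [Ep, En, ← Complex.exp_nat_mul, ← Complex.exp_add]
    congr 1
    rw [hn]
    push_cast
    field_simp
    ring
  calc ∑ i : Fin L, Ep a i * En b i
      = ∑ i ∈ Finset.range L, (Complex.exp (2 * π * Complex.I * n / L)) ^ i := by
        rw [← Fin.sum_univ_eq_sum_range (fun i => (Complex.exp (2 * π * Complex.I * n / L)) ^ i) L]
        exact Finset.sum_congr rfl (fun i _ => hterm i)
    _ = if a = b then (L : ℂ) else 0 := by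
        rw [geom_core L hL n (by omega)]
        by_cases h : a = b
        · have : n = 0 := by simp [hn, h]
          simp [h, this]
        · have : n ≠ 0 := by
            simp only [hn, sub_ne_zero]
            exact_mod_cast fun hh => h (Fin.ext (by exact_mod_cast hh))
          simp [h, this]

/-- Closed form of one Bloch step. -/
lemma blochStep_eq_s9 (L R : ℕ) (ε t : ℝ)
    (φ : Fin L → Fin R → Fin R → ℂ) (E : Fin L → Fin R → ℝ)
    (χ : Fin L → Fin R → ℂ) (a : Fin L) (r : Fin R) :
    blochStep L R ε t φ E χ a r =
      (1 / (L : ℂ)) * ∑ j : Fin L,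
        (∑ m : Fin R,
          ((2 * (π : ℂ) / R) * ∑ s : Fin R,
            (∑ p : Fin L, χ p s * En j p) * (starRingEnd ℂ) (φ j m s)) *
           Complex.exp (-(Complex.I * (E j m) * t / ε)) * φ j m r) * Ep j a := by
  simp only [blochStep, Ep, En]

/-- Discrete Fourier inversion: analysis after synthesis is the identity. -/
lemma fourier_inv (L : ℕ) (hL : 1 ≤ L) (g : Fin L → ℂ) (j : Fin L) :
    ∑ i : Fin L, ((1 / (L : ℂ)) * ∑ j' : Fin L, g j' * Ep j' i) * En j i = g j := by
  have hL0 : (L : ℂ) ≠ 0 := Nat.cast_ne_zero.mpr (by omega)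
  calc ∑ i : Fin L, ((1 / (L : ℂ)) * ∑ j' : Fin L, g j' * Ep j' i) * En j i
      = ∑ i : Fin L, ∑ j' : Fin L, (1 / (L : ℂ)) * g j' * (Ep j' i * En j i) := by
        refine Finset.sum_congr rfl fun i _ => ?_
        rw [Finset.mul_sum, Finset.sum_mul]
        exact Finset.sum_congr rfl fun j' _ => by ring
    _ = ∑ j' : Fin L, ∑ i : Fin L, (1 / (L : ℂ)) * g j' * (Ep j' i * En j i) := Finset.sum_comm
    _ = ∑ j' : Fin L, (1 / (L : ℂ)) * g j' * (if j' = j then (L : ℂ) else 0) := by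
        refine Finset.sum_congr rfl fun j' _ => ?_
        rw [← Finset.mul_sum, ker_sp L hL j' j]
    _ = g j := by
        simp only [mul_ite, mul_zero, Finset.sum_ite_eq', Finset.mem_univ, if_true]
        field_simp

/-- Discrete Fourier inversion: synthesis after analysis is the identity. -/
lemma fourier_synth (L : ℕ) (hL : 1 ≤ L) (g : Fin L → ℂ) (ℓ : Fin L) :
    (1 / (L : ℂ)) * ∑ j : Fin L, (∑ p : Fin L, g p * En j p) * Ep j ℓ = g ℓ := by
  have hL0 : (L : ℂ) ≠ 0 := Nat.cast_ne_zero.mpr (by omega)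
  have key : ∑ j : Fin L, (∑ p : Fin L, g p * En j p) * Ep j ℓ = g ℓ * L := by
    calc ∑ j : Fin L, (∑ p : Fin L, g p * En j p) * Ep j ℓ
        = ∑ j : Fin L, ∑ p : Fin L, g p * (Ep j ℓ * En j p) := by
          refine Finset.sum_congr rfl fun j _ => ?_
          rw [Finset.sum_mul]
          exact Finset.sum_congr rfl fun p _ => by ring
      _ = ∑ p : Fin L, ∑ j : Fin L, g p * (Ep j ℓ * En j p) := Finset.sum_comm
      _ = ∑ p : Fin L, g p * (if ℓ = p then (L : ℂ) else 0) := by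
          refine Finset.sum_congr rfl fun p _ => ?_
          rw [← Finset.mul_sum, ker_mom L hL ℓ p]
      _ = g ℓ * L := by
          simp only [mul_ite, mul_zero, Finset.sum_ite_eq, Finset.mem_univ, if_true]
  rw [key]
  field_simp

/-- Inverting the band-space propagation: applying the per-momentum analysis,
phase, synthesis with `Δt` and then with `-Δt` is the identity. -/
lemma band_inv {L R : ℕ} (hR : 1 ≤ R)
    (φ : Fin L → Fin R → Fin R → ℂ) (E : Fin L → Fin R → ℝ) (ε Δt : ℝ)
    (horth₁ : ∀ j : Fin L, ∀ m n : Fin R,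
      ∑ r : Fin R, φ j m r * (starRingEnd ℂ) (φ j n r) =
        if m = n then ((R : ℂ) / (2 * π)) else 0)
    (horth₂ : ∀ j : Fin L, ∀ r s : Fin R,
      ∑ m : Fin R, φ j m r * (starRingEnd ℂ) (φ j m s) =
        if r = s then ((R : ℂ) / (2 * π)) else 0)
    (f : Fin R → ℂ) (j : Fin L) (r : Fin R) :
    ∑ m : Fin R, ((2 * (π : ℂ) / R) * ∑ s : Fin R,
        (∑ m' : Fin R, ((2 * (π : ℂ) / R) * ∑ s' : Fin R, f s' * (starRingEnd ℂ) (φ j m' s')) *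
          Complex.exp (-(Complex.I * (E j m') * Δt / ε)) * φ j m' s) * (starRingEnd ℂ) (φ j m s)) *
      Complex.exp (-(Complex.I * (E j m) * ((-Δt : ℝ) : ℂ) / ε)) * φ j m r = f r := by
  have hR0 : (R : ℂ) ≠ 0 := Nat.cast_ne_zero.mpr (by omega)
  have hπ : (π : ℂ) ≠ 0 := by exact_mod_cast Real.pi_ne_zero
  set c : Fin R → ℂ := fun m' => (2 * (π : ℂ) / R) * ∑ s' : Fin R, f s' * (starRingEnd ℂ) (φ j m' s') with hc
  have key1 : ∀ m : Fin R, (2 * (π : ℂ) / R) * (∑ s : Fin R,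
      (∑ m' : Fin R, c m' * Complex.exp (-(Complex.I * (E j m') * Δt / ε)) * φ j m' s) *
        (starRingEnd ℂ) (φ j m s)) = c m * Complex.exp (-(Complex.I * (E j m) * Δt / ε)) := by
    intro m
    have : (∑ s : Fin R,
        (∑ m' : Fin R, c m' * Complex.exp (-(Complex.I * (E j m') * Δt / ε)) * φ j m' s) *
          (starRingEnd ℂ) (φ j m s)) =
        c m * Complex.exp (-(Complex.I * (E j m) * Δt / ε)) * ((R : ℂ) / (2 * π)) := by
      calc (∑ s : Fin R,
          (∑ m' : Fin R, c m' * Complex.exp (-(Complex.I * (E j m') * Δt / ε)) * φ j m' s) *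
            (starRingEnd ℂ) (φ j m s))
          = ∑ s : Fin R, ∑ m' : Fin R,
              c m' * Complex.exp (-(Complex.I * (E j m') * Δt / ε)) * (φ j m' s * (starRingEnd ℂ) (φ j m s)) := by
            refine Finset.sum_congr rfl fun s _ => ?_
            rw [Finset.sum_mul]
            exact Finset.sum_congr rfl fun m' _ => by ring
        _ = ∑ m' : Fin R, ∑ s : Fin R,
              c m' * Complex.exp (-(Complex.I * (E j m') * Δt / ε)) * (φ j m' s * (starRingEnd ℂ) (φ j m s)) := Finset.sum_comm
        _ = ∑ m' : Fin R, c m' * Complex.exp (-(Complex.I * (E j m') * Δt / ε)) *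
              (if m' = m then ((R : ℂ) / (2 * π)) else 0) := by
            refine Finset.sum_congr rfl fun m' _ => ?_
            rw [← Finset.mul_sum, horth₁ j m' m]
        _ = c m * Complex.exp (-(Complex.I * (E j m) * Δt / ε)) * ((R : ℂ) / (2 * π)) := by
            simp only [mul_ite, mul_zero, Finset.sum_ite_eq', Finset.mem_univ, if_true]
    rw [this]
    field_simp
  have key2 : ∀ m : Fin R,
      Complex.exp (-(Complex.I * (E j m) * Δt / ε)) * Complex.exp (-(Complex.I * (E j m) * ((-Δt : ℝ) : ℂ) / ε)) = 1 := by
    intro m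
    rw [← Complex.exp_add, ← Complex.exp_zero]
    congr 1
    push_cast
    ring
  calc ∑ m : Fin R, ((2 * (π : ℂ) / R) * ∑ s : Fin R,
        (∑ m' : Fin R, c m' * Complex.exp (-(Complex.I * (E j m') * Δt / ε)) * φ j m' s) * (starRingEnd ℂ) (φ j m s)) *
      Complex.exp (-(Complex.I * (E j m) * ((-Δt : ℝ) : ℂ) / ε)) * φ j m r
      = ∑ m : Fin R, c m * φ j m r := by
        refine Finset.sum_congr rfl fun m _ => ?_
        rw [key1 m]
        calc c m * Complex.exp (-(Complex.I * (E j m) * Δt / ε)) *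
              Complex.exp (-(Complex.I * (E j m) * ((-Δt : ℝ) : ℂ) / ε)) * φ j m r
            = c m * (Complex.exp (-(Complex.I * (E j m) * Δt / ε)) *
              Complex.exp (-(Complex.I * (E j m) * ((-Δt : ℝ) : ℂ) / ε))) * φ j m r := by ring
          _ = c m * φ j m r := by rw [key2 m]; ring
    _ = ∑ s' : Fin R, (2 * (π : ℂ) / R) * f s' * ∑ m : Fin R, φ j m r * (starRingEnd ℂ) (φ j m s') := by
        rw [hc]
        simp only
        calc ∑ m : Fin R, ((2 * (π : ℂ) / R) * ∑ s' : Fin R, f s' * (starRingEnd ℂ) (φ j m s')) * φ j m r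
            = ∑ m : Fin R, ∑ s' : Fin R, (2 * (π : ℂ) / R) * f s' * (φ j m r * (starRingEnd ℂ) (φ j m s')) := by
              refine Finset.sum_congr rfl fun m _ => ?_
              rw [Finset.mul_sum, Finset.sum_mul]
              exact Finset.sum_congr rfl fun s' _ => by ring
          _ = ∑ s' : Fin R, ∑ m : Fin R, (2 * (π : ℂ) / R) * f s' * (φ j m r * (starRingEnd ℂ) (φ j m s')) := Finset.sum_comm
          _ = ∑ s' : Fin R, (2 * (π : ℂ) / R) * f s' * ∑ m : Fin R, φ j m r * (starRingEnd ℂ) (φ j m s') := by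
              refine Finset.sum_congr rfl fun s' _ => ?_
              rw [← Finset.mul_sum]
    _ = f r := by
        have : ∀ s' : Fin R, (2 * (π : ℂ) / R) * f s' * (∑ m : Fin R, φ j m r * (starRingEnd ℂ) (φ j m s')) =
            if r = s' then (2 * (π : ℂ) / R) * f s' * ((R : ℂ) / (2 * π)) else 0 := by
          intro s'
          rw [horth₂ j r s']
          by_cases h : r = s' <;> simp [h]
        rw [Finset.sum_congr rfl fun s' _ => this s']
        rw [Finset.sum_ite_eq Finset.univ r (fun s' => (2 * (π : ℂ) / R) * f s' * ((R : ℂ) / (2 * π)))]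
        simp only [Finset.mem_univ, if_true]
        field_simp

theorem blochStep_time_reversible
    (L R : ℕ) (hL : 1 ≤ L) (hR : 1 ≤ R) (ε Δt : ℝ) (hε : 0 < ε)
    (φ : Fin L → Fin R → Fin R → ℂ) (E : Fin L → Fin R → ℝ)
    (horth₁ : ∀ j : Fin L, ∀ m n : Fin R,
      ∑ r : Fin R, φ j m r * (starRingEnd ℂ) (φ j n r) =
        if m = n then ((R : ℂ) / (2 * π)) else 0)
    (horth₂ : ∀ j : Fin L, ∀ r s : Fin R,
      ∑ m : Fin R, φ j m r * (starRingEnd ℂ) (φ j m s) =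
        if r = s then ((R : ℂ) / (2 * π)) else 0)
    (ψ : Fin L → Fin R → ℂ) :
    blochStep L R ε (-Δt) φ E (blochStep L R ε Δt φ E ψ) = ψ := by
  funext ℓ r
  rw [blochStep_eq_s9 L R ε (-Δt) φ E (blochStep L R ε Δt φ E ψ) ℓ r]
  simp only [blochStep_eq_s9 L R ε Δt φ E ψ]
  simp only [fourier_inv L hL]
  simp only [band_inv hR φ E ε Δt horth₁ horth₂]
  exact fourier_synth L hL (fun p => ψ p r) ℓ
end
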